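/- arXiv:1109.2765 — 3 statements merged into one kernel-verified Lean document; each statement's English description precedes it below -/
import Mathlib

section
/- Let R be a finitely generated subring of a number field k, viewed inside ℂ via a fixed embedding of k into ℂ. Let β be an element of R, and set A = { m + nβ : m, n ∈ ℤ } and B = { m + nβ : m, n ∈ ℚ }. If b is an element of R with b ∉ B, then there exist a finite ring S and a ring homomorphism η : R → S such that η(b) ∉ η(A). -/
/-!
Pick a `ℚ`-linear functional `f` on `k` that vanishes on `1` and `β` and takes the value `1`
at `b`. Fix a `ℚ`-basis of `k`. Only finitely many rationals are involved: the structure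
constants of the basis, the coordinates of `1` and of the generators of `R`, and the values of
`f` on the basis. So for all but finitely many primes `p`, the `ℤ_(p)`-span `V` of the basis is
a subring containing `R`, and `f` maps it into `ℤ_(p)`. The ring `V / pV` is finite, because
`V` is the sum of the `ℤ`-span of the basis and `pV`. If `b ≡ a (mod pV)` for some `a ∈ A`, then
`1 = f (b - a)` would lie in `p ℤ_(p)`.
-/

namespace Rat

def pIntegral (p : ℕ) : Subring ℚ where
  carrier := {q | q.den.Coprime p}
  zero_mem' := by simp
  one_mem' := by simp
  add_mem' {q r} hq hr := Nat.Coprime.coprime_dvd_left (add_den_dvd q r) (hq.mul_left hr)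
  mul_mem' {q r} hq hr := Nat.Coprime.coprime_dvd_left (mul_den_dvd q r) (hq.mul_left hr)
  neg_mem' {q} hq := by simpa using hq

variable {p : ℕ} {q : ℚ}

@[simp]
theorem mem_pIntegral : q ∈ pIntegral p ↔ q.den.Coprime p := Iff.rfl

theorem exists_eq_intCast_add_natCast_mul (hq : q ∈ pIntegral p) :
    ∃ z : ℤ, ∃ q' ∈ pIntegral p, q = z + p * q' := by
  obtain ⟨u, v, huv⟩ := Nat.isCoprime_iff_coprime.2 hq
  refine ⟨u * q.num, v * q, (pIntegral p).mul_mem (intCast_mem _ v) hq, ?_⟩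
  have huv' : (u : ℚ) * q.den + v * p = 1 := by exact_mod_cast huv
  push_cast
  rw [← mul_den_eq_num]
  linear_combination (-q) * huv'

theorem natCast_mul_ne_one (hp : p ≠ 1) (hq : q ∈ pIntegral p) : (p : ℚ) * q ≠ 1 := by
  intro h
  have hp0 : p ≠ 0 := by rintro rfl; simp at h
  rw [eq_inv_of_mul_eq_one_right h, mem_pIntegral, inv_natCast_den, if_neg hp0,
    Nat.coprime_self] at hq
  exact hp hq

theorem exists_prime_forall_mem_pIntegral {α : Type*} [Finite α] (f : α → ℚ) :
    ∃ p : ℕ, p.Prime ∧ ∀ a, f a ∈ pIntegral p := by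
  obtain ⟨M, hM⟩ := (Set.finite_range fun a => (f a).den).bddAbove
  obtain ⟨p, hMp, hp⟩ := Nat.exists_infinite_primes (M + 1)
  refine ⟨p, hp, fun a => Nat.Coprime.symm <| (Nat.Prime.coprime_iff_not_dvd hp).2 ?_⟩
  exact Nat.not_dvd_of_pos_of_lt (f a).den_pos (by have : (f a).den ≤ M := hM ⟨a, rfl⟩; omega)

end Rat

theorem Ideal.finite_quotient_span_natCast {V ι : Type*} [CommRing V] [Fintype ι] {p : ℕ}
    (hp : p ≠ 0) (g : ι → V) (h : ∀ x, ∃ z : ι → ℤ, ∃ y, x = ∑ i, z i • g i + p • y) :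
    Finite (V ⧸ Ideal.span {(p : V)}) := by
  set mk := Ideal.Quotient.mk (Ideal.span {(p : V)})
  have h_torsion : ∀ s : V ⧸ Ideal.span {(p : V)}, p • s = 0 := by
    rintro ⟨x⟩
    rw [Submodule.Quotient.quot_mk_eq_mk, Ideal.Quotient.mk_eq_mk, ← map_nsmul,
      Ideal.Quotient.eq_zero_iff_mem, nsmul_eq_mul]
    exact Ideal.mul_mem_right _ _ (Ideal.mem_span_singleton_self _)
  have h_closure : AddSubgroup.closure (Set.range (mk ∘ g)) = ⊤ := by
    refine eq_top_iff.2 fun s _ => ?_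
    obtain ⟨x, rfl⟩ := Ideal.Quotient.mk_surjective s
    obtain ⟨z, y, rfl⟩ := h x
    rw [map_add, map_nsmul, h_torsion, add_zero, map_sum]
    exact AddSubgroup.sum_mem _ fun i _ => by
      rw [map_zsmul]
      exact AddSubgroup.zsmul_mem _ (AddSubgroup.subset_closure (Set.mem_range_self i)) _
  have : AddGroup.FG (V ⧸ Ideal.span {(p : V)}) :=
    AddGroup.fg_iff.2 ⟨_, h_closure, Set.finite_range _⟩
  exact AddCommGroup.finite_of_fg_isAddTorsion _ fun s =>
    isOfFinAddOrder_iff_nsmul_eq_zero.2 ⟨p, Nat.pos_of_ne_zero hp, h_torsion s⟩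

theorem Submodule.exists_dual_eq_one_of_notMem {K V : Type*} [Field K] [AddCommGroup V]
    [Module K V] {W : Submodule K V} {x : V} (hx : x ∉ W) :
    ∃ f : Module.Dual K V, (∀ y ∈ W, f y = 0) ∧ f x = 1 := by
  obtain ⟨f, hf⟩ := Module.Projective.exists_dual_eq_one K (x := W.mkQ x) (by simpa using hx)
  exact ⟨f.comp W.mkQ, fun y hy => by simp [(Submodule.Quotient.mk_eq_zero W).2 hy], hf⟩

namespace Module.Basis

variable {ι : Type*} [Fintype ι]

section

variable {K : Type*} [CommRing K] (C : Subring K)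

theorem apply_mem_of_forall_repr_mem {M : Type*} [AddCommGroup M] [Module K M]
    (w : Basis ι K M) (f : M →ₗ[K] K) (hf : ∀ i, f (w i) ∈ C) {x : M}
    (hx : ∀ i, w.repr x i ∈ C) : f x ∈ C := by
  rw [← w.sum_repr x, map_sum]
  exact C.sum_mem fun i _ => by simpa only [map_smul, smul_eq_mul] using C.mul_mem (hx i) (hf i)

variable {A : Type*} [Ring A] [Algebra K A] (w : Basis ι K A)

def latticeSubring (h_one : ∀ i, w.repr 1 i ∈ C) (h_mul : ∀ i j l, w.repr (w i * w j) l ∈ C) :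
    Subring A where
  carrier := {x | ∀ i, w.repr x i ∈ C}
  zero_mem' i := by simp
  one_mem' := h_one
  add_mem' hx hy i := by simpa using C.add_mem (hx i) (hy i)
  neg_mem' hx i := by simpa using C.neg_mem (hx i)
  mul_mem' {x y} hx hy l :=
    w.apply_mem_of_forall_repr_mem C ((w.coord l).comp (LinearMap.mulRight K y))
      (fun i => w.apply_mem_of_forall_repr_mem C ((w.coord l).comp (LinearMap.mulLeft K (w i)))
        (fun j => h_mul i j l) hy) hx

variable {C w} {h_one : ∀ i, w.repr 1 i ∈ C} {h_mul : ∀ i j l, w.repr (w i * w j) l ∈ C}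

theorem basis_mem_latticeSubring (i : ι) : w i ∈ w.latticeSubring C h_one h_mul := by
  classical
  intro j
  rw [repr_self, Finsupp.single_apply]
  split_ifs
  exacts [C.one_mem, C.zero_mem]

end

theorem exists_eq_sum_zsmul_add_nsmul {k : Type*} [CommRing k] [Algebra ℚ k] {w : Basis ι ℚ k}
    {p : ℕ} {h_one : ∀ i, w.repr 1 i ∈ Rat.pIntegral p}
    {h_mul : ∀ i j l, w.repr (w i * w j) l ∈ Rat.pIntegral p}
    (x : w.latticeSubring _ h_one h_mul) :
    ∃ z : ι → ℤ, ∃ y, x = ∑ i, z i • ⟨w i, basis_mem_latticeSubring i⟩ + p • y := by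
  choose z c hc hzc using fun i => Rat.exists_eq_intCast_add_natCast_mul (x.2 i)
  refine ⟨z, ⟨∑ i, c i • w i, fun i => by rw [repr_sum_self]; exact hc i⟩, ?_⟩
  ext
  push_cast
  calc (x : k) = ∑ i, w.repr x i • w i := (w.sum_repr x).symm
    _ = ∑ i, (z i • w i + p • c i • w i) := by
      simp only [hzc, add_smul, mul_smul, Int.cast_smul_eq_zsmul, Nat.cast_smul_eq_nsmul]
    _ = _ := by rw [Finset.sum_add_distrib, Finset.smul_sum]

end Module.Basis

section

variable {k : Type*} [CommRing k] [Algebra ℚ k]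

theorem exists_prime_subring_finite_quotient [FiniteDimensional ℚ k] (s : Finset k)
    (f : k →ₗ[ℚ] ℚ) :
    ∃ p : ℕ, p.Prime ∧ ∃ V : Subring k, (s : Set k) ⊆ V ∧
      (∀ x ∈ V, f x ∈ Rat.pIntegral p) ∧ Finite (V ⧸ Ideal.span {(p : V)}) := by
  let w := Module.finBasis ℚ k
  obtain ⟨p, hp, hq⟩ := Rat.exists_prime_forall_mem_pIntegral <|
    Sum.elim (fun t : Fin _ × Fin _ × Fin _ => w.repr (w t.1 * w t.2.1) t.2.2) <|
      Sum.elim (fun i => w.repr 1 i) <|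
        Sum.elim (fun i => f (w i)) fun t : s × Fin _ => w.repr t.1 t.2
  refine ⟨p, hp,
    w.latticeSubring _ (fun i => hq (.inr (.inl i))) (fun i j l => hq (.inl (i, j, l))),
    fun g hg i => hq (.inr (.inr (.inr (⟨g, hg⟩, i)))),
    fun x hx => w.apply_mem_of_forall_repr_mem _ f (fun i => hq (.inr (.inr (.inl i)))) hx,
    Ideal.finite_quotient_span_natCast hp.ne_zero _ Module.Basis.exists_eq_sum_zsmul_add_nsmul⟩

theorem notMem_span_natCast_of_apply_eq_one {V : Subring k} {p : ℕ} (hp : p ≠ 1)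
    (f : k →ₗ[ℚ] ℚ) (hf : ∀ x ∈ V, f x ∈ Rat.pIntegral p) {x : V} (hx : f x = 1) :
    x ∉ Ideal.span {(p : V)} := by
  rw [Ideal.mem_span_singleton']
  rintro ⟨y, rfl⟩
  refine Rat.natCast_mul_ne_one hp (hf y y.2) ?_
  rwa [Subring.coe_mul, Subring.coe_natCast, mul_comm, ← nsmul_eq_mul, map_nsmul,
    nsmul_eq_mul] at hx

end

theorem finite_ring_quotient_separating_from_integer_lattice_general
    (k : Type) [Field k] [NumberField k]
    (R : Subring k) (hR : ∃ s : Finset k, R = Subring.closure ↑s)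
    (β : ↥R) (b : ↥R)
    (hb : (b : k) ∉ {x : k | ∃ m n : ℚ, x = (m : k) + (n : k) * (β : k)}) :
    ∃ (S : Type) (_ : CommRing S) (_ : Finite S) (η : ↥R →+* S),
      η b ∉ η '' {x : ↥R | ∃ m n : ℤ, (x : k) = (m : k) + (n : k) * (β : k)} := by
  obtain ⟨s, rfl⟩ := hR
  have hb_span : (b : k) ∉ Submodule.span ℚ {1, (β : k)} := by
    intro hmem
    obtain ⟨m, n, h⟩ := Submodule.mem_span_pair.1 hmem
    exact hb ⟨m, n, by rw [← h, Rat.smul_def, Rat.smul_def, mul_one]⟩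
  obtain ⟨f, hf_span, hf_b⟩ := Submodule.exists_dual_eq_one_of_notMem hb_span
  obtain ⟨p, hp, V, hsV, hfV, hV⟩ := exists_prime_subring_finite_quotient s f
  let incl := Subring.inclusion (Subring.closure_le.2 hsV)
  refine ⟨V ⧸ Ideal.span {(p : V)}, inferInstance, hV, (Ideal.Quotient.mk _).comp incl, ?_⟩
  rintro ⟨a, ⟨m, n, ha⟩, hab⟩
  have hf_a : f a = 0 := hf_span a <| Submodule.mem_span_pair.2 ⟨m, n, by simp [ha, Rat.smul_def]⟩
  refine notMem_span_natCast_of_apply_eq_one hp.ne_one f hfV (x := incl b - incl a) ?_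
    (Ideal.Quotient.eq.1 hab.symm)
  simp [incl, hf_a, hf_b]

/-- Let `R` be a finitely generated subring of a number field `k`, viewed inside `ℂ`
via a fixed embedding `ι : k → ℂ`.  Let `β ∈ R`, and set `A = {m + nβ : m, n ∈ ℤ}` and
`B = {m + nβ : m, n ∈ ℚ}`.  If `b ∈ R` and `b ∉ B`, then there exist a finite ring `S`
and a ring homomorphism `η : R → S` such that `η b ∉ η '' A`. -/
theorem finite_ring_quotient_separating_from_integer_lattice
    (k : Type) [Field k] [NumberField k] (ι : k →+* ℂ)
    (R : Subring k) (hR : ∃ s : Finset k, R = Subring.closure ↑s)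
    (β : ↥R) (b : ↥R)
    (hb : (b : k) ∉ {x : k | ∃ m n : ℚ, x = (m : k) + (n : k) * (β : k)}) :
    ∃ (S : Type) (_ : CommRing S) (_ : Finite S) (η : ↥R →+* S),
      η b ∉ η '' {x : ↥R | ∃ m n : ℤ, (x : k) = (m : k) + (n : k) * (β : k)} :=
  finite_ring_quotient_separating_from_integer_lattice_general k R hR β b hb
end

section
/- Let G be a group, let G₀ be a subgroup of finite index in G, and let H and K be finitely generated subgroups of G. Set H₀ = H ∩ G₀ and K₀ = K ∩ G₀. If the product set H₀K₀ = { hk : h ∈ H₀, k ∈ K₀ } is separable in G₀, then the product set HK = { hk : h ∈ H, k ∈ K } is separable in G. -/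
/-- A subset `X` of a group `G` is separable (closed in the profinite topology) if for
every `γ ∈ G − X` there is a homomorphism `φ` from `G` to a finite group with
`φ γ ∉ φ '' X`. -/
def IsSeparableSubset {G : Type} [Group G] (X : Set G) : Prop :=
  ∀ γ : G, γ ∉ X → ∃ (F : Type) (_ : Group F) (_ : Finite F) (φ : G →* F), φ γ ∉ φ '' X

lemma sep_translate {G : Type} [Group G] (X : Set G) (hX : IsSeparableSubset X) (a b : G) :
    IsSeparableSubset ((fun x => a * x * b) '' X) := by
  intro γ hγ
  obtain ⟨F, _, _, φ, hφ⟩ := hX (a⁻¹ * γ * b⁻¹) (by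
    intro hx
    exact hγ ⟨_, hx, by group⟩)
  refine ⟨F, ‹_›, ‹_›, φ, ?_⟩
  rintro ⟨-, ⟨x, hx, rfl⟩, he⟩
  refine hφ ⟨x, hx, ?_⟩
  have h1 : φ (a * x * b) = φ γ := he
  have : φ (a⁻¹ * (a * x * b) * b⁻¹) = φ (a⁻¹ * γ * b⁻¹) := by
    simp only [map_mul, h1]
  rw [← this]
  congr 1
  group

lemma sep_iUnion {G : Type} [Group G] {ι : Type} [Finite ι] (X : ι → Set G)
    (hX : ∀ i, IsSeparableSubset (X i)) : IsSeparableSubset (⋃ i, X i) := by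
  intro γ hγ
  have h' : ∀ i, ∃ (F : Type) (_ : Group F) (_ : Finite F) (φ : G →* F), φ γ ∉ φ '' X i := by
    intro i
    exact hX i γ (fun hx => hγ (Set.mem_iUnion.2 ⟨i, hx⟩))
  choose F hgrp hfin φ hφ using h'
  letI : ∀ i, Group (F i) := hgrp
  haveI : ∀ i, Finite (F i) := hfin
  refine ⟨∀ i, F i, inferInstance, inferInstance, Pi.monoidHom φ, ?_⟩
  rintro ⟨x, hx, he⟩
  obtain ⟨i, hxi⟩ := Set.mem_iUnion.1 hx
  exact hφ i ⟨x, hxi, congrFun he i⟩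

lemma sep_of_sep_subgroup {G : Type} [Group G] (G₀ : Subgroup G) (hG₀ : G₀.FiniteIndex)
    (X : Set ↥G₀) (hX : IsSeparableSubset X) :
    IsSeparableSubset ((fun x : ↥G₀ => (x : G)) '' X) := by
  haveI := hG₀
  intro γ hγ
  by_cases hmem : γ ∈ G₀
  · obtain ⟨F, _, _, φ, hφ⟩ := hX ⟨γ, hmem⟩ (fun hx => hγ ⟨_, hx, rfl⟩)
    set N : Subgroup G := φ.ker.map G₀.subtype with hN
    have hNle : N ≤ G₀ := by
      rintro x ⟨y, -, rfl⟩; exact y.2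
    have hNfi : N.FiniteIndex := by
      constructor
      have h1 : N.relIndex G₀ * G₀.index = N.index := Subgroup.relIndex_mul_index hNle
      have h2 : N.subgroupOf G₀ = φ.ker := by
        rw [hN, ← Subgroup.comap_subtype,
          Subgroup.comap_map_eq_self_of_injective G₀.subtype_injective]
      have h3 : N.relIndex G₀ ≠ 0 := by
        rw [Subgroup.relIndex, h2]
        exact Subgroup.FiniteIndex.index_ne_zero
      rw [← h1]
      exact mul_ne_zero h3 hG₀.index_ne_zero
    haveI := hNfi
    refine ⟨G ⧸ N.normalCore, inferInstance, inferInstance, QuotientGroup.mk' _, ?_⟩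
    rintro ⟨-, ⟨x, hx, rfl⟩, he⟩
    have he' : ((x : G) : G ⧸ N.normalCore) = ((γ : G) : G ⧸ N.normalCore) := he
    have hmem2 : ((x : G))⁻¹ * γ ∈ N.normalCore := QuotientGroup.eq.1 he'
    have hmem3 : ((x : G))⁻¹ * γ ∈ N := N.normalCore_le hmem2
    obtain ⟨y, hy, hyeq⟩ := hmem3
    refine hφ ⟨x, hx, ?_⟩
    have hxy : (⟨γ, hmem⟩ : ↥G₀) = x * y := by
      ext
      have : (y : G) = ((x : G))⁻¹ * γ := hyeq
      simp only [Subgroup.coe_mul, this]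
      group
    rw [hxy, map_mul, hy, mul_one]
  · refine ⟨G ⧸ G₀.normalCore, inferInstance, inferInstance, QuotientGroup.mk' _, ?_⟩
    rintro ⟨-, ⟨x, hx, rfl⟩, he⟩
    have he' : ((x : G) : G ⧸ G₀.normalCore) = ((γ : G) : G ⧸ G₀.normalCore) := he
    have hmem2 : ((x : G))⁻¹ * γ ∈ G₀.normalCore := QuotientGroup.eq.1 he'
    have : γ ∈ G₀ := by
      have h4 := G₀.normalCore_le hmem2
      have h5 := mul_mem x.2 h4
      simpa using h5
    exact hmem this

/-- Let `G₀` be a finite-index subgroup of `G`, and `H`, `K` finitely generated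
subgroups of `G`.  Set `H₀ = H ∩ G₀` and `K₀ = K ∩ G₀`.  If the product set `H₀K₀` is
separable in `G₀`, then the product set `HK` is separable in `G`. -/
theorem product_separable_of_separable_in_finite_index_subgroup
    {G : Type} [Group G] (G₀ H K : Subgroup G)
    (hG₀ : G₀.FiniteIndex) (hH : H.FG) (hK : K.FG)
    (h : IsSeparableSubset
      {x : ↥G₀ | ∃ h ∈ H ⊓ G₀, ∃ k ∈ K ⊓ G₀, (x : G) = h * k}) :
    IsSeparableSubset {x : G | ∃ h ∈ H, ∃ k ∈ K, x = h * k} := by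
  haveI := hG₀
  set X₀ : Set ↥G₀ := {x : ↥G₀ | ∃ h ∈ H ⊓ G₀, ∃ k ∈ K ⊓ G₀, (x : G) = h * k} with hX₀
  set Y : Set G := (fun x : ↥G₀ => (x : G)) '' X₀ with hY
  have hYsep : IsSeparableSubset Y := sep_of_sep_subgroup G₀ hG₀ X₀ h
  haveI : (G₀.subgroupOf H).FiniteIndex := Subgroup.instFiniteIndex_subgroupOf G₀ H
  haveI : (G₀.subgroupOf K).FiniteIndex := Subgroup.instFiniteIndex_subgroupOf G₀ K
  have key : {x : G | ∃ h ∈ H, ∃ k ∈ K, x = h * k} =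
      ⋃ p : (H ⧸ G₀.subgroupOf H) × (K ⧸ G₀.subgroupOf K),
        (fun y => ((Quotient.out p.1 : ↥H) : G) * y *
          ((Quotient.out p.2 : ↥K) : G)⁻¹) '' Y := by
    ext x
    simp only [Set.mem_iUnion, Set.mem_setOf_eq]
    constructor
    · rintro ⟨a, ha, b, hb, rfl⟩
      refine ⟨⟨QuotientGroup.mk ⟨a, ha⟩, QuotientGroup.mk ⟨b⁻¹, inv_mem hb⟩⟩, ?_⟩
      set t : ↥H := Quotient.out (QuotientGroup.mk ⟨a, ha⟩ : H ⧸ G₀.subgroupOf H) with ht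
      set s : ↥K := Quotient.out (QuotientGroup.mk ⟨b⁻¹, inv_mem hb⟩ : K ⧸ G₀.subgroupOf K)
        with hs
      have ht0 : t⁻¹ * ⟨a, ha⟩ ∈ G₀.subgroupOf H :=
        QuotientGroup.eq.1 (QuotientGroup.out_eq' _)
      have hs0 : s⁻¹ * ⟨b⁻¹, inv_mem hb⟩ ∈ G₀.subgroupOf K :=
        QuotientGroup.eq.1 (QuotientGroup.out_eq' _)
      have ht1 : ((t : G))⁻¹ * a ∈ G₀ := by
        simpa [Subgroup.mem_subgroupOf] using ht0
      have hs1 : ((s : G))⁻¹ * b⁻¹ ∈ G₀ := by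
        simpa [Subgroup.mem_subgroupOf] using hs0
      have hs2 : b * (s : G) ∈ G₀ := by
        have h6 : (((s : G))⁻¹ * b⁻¹)⁻¹ ∈ G₀ := G₀.inv_mem hs1
        simpa using h6
      set g : G := ((t : G))⁻¹ * a * (b * (s : G)) with hg
      have hgG₀ : g ∈ G₀ := G₀.mul_mem ht1 hs2
      refine ⟨g, ⟨⟨g, hgG₀⟩, ⟨((t : G))⁻¹ * a,
        Subgroup.mem_inf.2 ⟨H.mul_mem (H.inv_mem t.2) ha, ht1⟩,
        b * (s : G), Subgroup.mem_inf.2 ⟨K.mul_mem hb s.2, hs2⟩, rfl⟩, rfl⟩, ?_⟩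
      rw [hg]
      group
    · rintro ⟨⟨t, s⟩, -, ⟨y, hy, rfl⟩, rfl⟩
      obtain ⟨h₀, hh₀, k₀, hk₀, heq⟩ := hy
      obtain ⟨hh₀H, hh₀G⟩ := Subgroup.mem_inf.1 hh₀
      obtain ⟨hk₀K, hk₀G⟩ := Subgroup.mem_inf.1 hk₀
      refine ⟨(Quotient.out t : ↥H) * h₀, H.mul_mem (Quotient.out t : ↥H).2 hh₀H,
        k₀ * ((Quotient.out s : ↥K) : G)⁻¹,
        K.mul_mem hk₀K (K.inv_mem (Quotient.out s : ↥K).2), ?_⟩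
      dsimp only
      rw [heq]
      group
  rw [key]
  exact sep_iUnion _ (fun p => sep_translate Y hYsep _ _)
end

section
/- Let Γ be a discrete subgroup of PSL(2,ℂ) of finite covolume, contained in PSL(2,R) where R is a finitely generated subring of a number field k. Then every maximal abelian subgroup A of Γ is closed in the congruence topology on Γ: for every γ ∈ Γ − A there is a non-zero ideal I of R such that the image of γ under the congruence homomorphism Γ → PSL(2,R/I) does not lie in the image of A. -/
set_option synthInstance.maxHeartbeats 400000
set_option maxHeartbeats 800000

open Matrix MeasureTheory

/-- The special linear group `SL(2, ℂ)`, topologized as a subspace of the matrices. -/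
abbrev SL2C := Matrix.SpecialLinearGroup (Fin 2) ℂ

noncomputable instance : TopologicalSpace SL2C := instTopologicalSpaceSubtype

/-- `PSL(2, ℂ)`: the quotient of `SL(2, ℂ)` by its center `{±I}`. -/
abbrev PSL2C := SL2C ⧸ Subgroup.center SL2C

noncomputable instance : MeasurableSpace PSL2C := borel _

/-- A subgroup `Γ ≤ PSL(2, ℂ)` has finite covolume if, with respect to a Haar measure
`μ` on `PSL(2, ℂ)`, the action of `Γ` on `PSL(2, ℂ)` admits a fundamental domain of
finite measure (equivalently, the quotient carries an induced invariant measure of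
finite total mass). -/
def HasFiniteCovolume (Γ : Subgroup PSL2C) : Prop :=
  ∃ μ : Measure PSL2C, μ.IsHaarMeasure ∧
    ∃ s : Set PSL2C, IsFundamentalDomain (↥Γ) s μ ∧ μ s ≠ ⊤

/-- `PSL(2, R)` for a commutative ring `R`: `SL(2, R)` modulo its center. -/
abbrev PSL2 (R : Type) [CommRing R] :=
  Matrix.SpecialLinearGroup (Fin 2) R ⧸ Subgroup.center (Matrix.SpecialLinearGroup (Fin 2) R)

/-- `Γ ≤ PSL(2, ℂ)` is contained in `PSL(2, R)` for a subring `R ≤ ℂ`: every element of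
`Γ` is represented by a matrix in `SL(2, R)`. -/
def ContainedInPSL2 (R : Subring ℂ) (Γ : Subgroup PSL2C) : Prop :=
  ∀ x : ↥Γ, ∃ A : Matrix.SpecialLinearGroup (Fin 2) ↥R,
    (QuotientGroup.mk (Matrix.SpecialLinearGroup.map R.subtype A) : PSL2C) = (x : PSL2C)

/-- A subset `X` of `Γ ≤ PSL(2, ℂ)`, with `Γ ⊆ PSL(2, R)`, is closed in the congruence
topology on `Γ` (with respect to `R`) if for every `γ ∈ Γ − X` there is a non-zero
ideal `I` of `R` such that the image of `γ` under the congruence homomorphism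
`Γ → PSL(2, R) → PSL(2, R/I)` does not lie in the image of `X`.  The congruence
homomorphism `η` is characterized by sending any element of `Γ` represented by a
matrix `A ∈ SL(2, R)` to the class of the reduction of `A` modulo `I`. -/
def CongruenceClosed (R : Subring ℂ) (Γ : Subgroup PSL2C) (X : Set ↥Γ) : Prop :=
  ∀ γ : ↥Γ, γ ∉ X → ∃ I : Ideal ↥R, I ≠ ⊥ ∧
    ∃ η : ↥Γ →* PSL2 (↥R ⧸ I),
      (∀ (x : ↥Γ) (A : Matrix.SpecialLinearGroup (Fin 2) ↥R),
        (QuotientGroup.mk (Matrix.SpecialLinearGroup.map R.subtype A) : PSL2C) = (x : PSL2C) →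
        η x = QuotientGroup.mk (Matrix.SpecialLinearGroup.map (Ideal.Quotient.mk I) A)) ∧
      η γ ∉ η '' X

/-- `R` is a finitely generated subring of a number field (a subfield of `ℂ` that is
finite-dimensional over `ℚ`). -/
def IsFGSubringOfNumberField (R : Subring ℂ) : Prop :=
  (∃ s : Finset ℂ, R = Subring.closure ↑s) ∧
  ∃ k : Subfield ℂ, FiniteDimensional ℚ ↥k ∧ R ≤ k.toSubring

/-- `A` is a maximal abelian subgroup of the group `G`. -/
def IsMaxAbelian {G : Type} [Group G] (A : Subgroup G) : Prop :=
  (∀ a ∈ A, ∀ b ∈ A, a * b = b * a) ∧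
  ∀ A' : Subgroup G, (∀ a ∈ A', ∀ b ∈ A', a * b = b * a) → A ≤ A' → A' = A


lemma myMaxAbelian_exists_noncomm {G : Type} [Group G] {A : Subgroup G}
    (hA : IsMaxAbelian A) {γ : G} (hγ : γ ∉ A) : ∃ a ∈ A, γ * a ≠ a * γ := by
  by_contra hcon
  push_neg at hcon
  set S : Set G := ↑A ∪ {γ} with hS
  have hSsub : S ⊆ ↑(Subgroup.centralizer S) := by
    intro x hx
    rw [SetLike.mem_coe, Subgroup.mem_centralizer_iff]
    intro g hg
    rcases hg with hg | hg <;> rcases hx with hx | hx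
    · exact hA.1 g hg x hx
    · rw [Set.mem_singleton_iff] at hx; subst hx; exact (hcon g hg).symm
    · rw [Set.mem_singleton_iff] at hg; subst hg; exact hcon x hx
    · rw [Set.mem_singleton_iff] at hx hg; subst hx; subst hg; rfl
  have h1 : Subgroup.closure S ≤ Subgroup.centralizer S :=
    (Subgroup.closure_le _).mpr hSsub
  have hcomm : ∀ x ∈ Subgroup.closure S, ∀ y ∈ Subgroup.closure S, x * y = y * x := by
    have h2 : Subgroup.closure S ≤ Subgroup.centralizer ↑(Subgroup.closure S) := by
      apply (Subgroup.closure_le _).mpr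
      intro x hx
      rw [SetLike.mem_coe, Subgroup.mem_centralizer_iff]
      intro g hg
      exact (Subgroup.mem_centralizer_iff.mp (h1 hg) x hx).symm
    intro x hx y hy
    exact Subgroup.mem_centralizer_iff.mp (h2 hy) x hx
  have hAle : A ≤ Subgroup.closure S := fun x hx => Subgroup.subset_closure (Or.inl hx)
  have hEq := hA.2 (Subgroup.closure S) hcomm hAle
  exact hγ (hEq ▸ Subgroup.subset_closure (Or.inr rfl))

lemma myInt_isJacobsonRing : IsJacobsonRing ℤ := by
  rw [isJacobsonRing_iff_prime_eq]
  intro P hP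
  rcases eq_or_ne P ⊥ with rfl | hPb
  · refine le_antisymm ?_ Ideal.le_jacobson
    intro x hx
    rw [Ideal.mem_jacobson_bot] at hx
    have h1 := hx 1
    have h2 := hx (-1)
    rw [Int.isUnit_iff] at h1 h2
    simp only [Ideal.mem_bot]
    rcases h1 with h1 | h1 <;> rcases h2 with h2 | h2 <;> omega
  · haveI := hP
    have : P.IsMaximal := IsPrime.to_maximal_ideal hPb
    exact Ideal.jacobson_eq_self_of_isMaximal

lemma mySubring_finiteType {R : Subring ℂ} (s : Finset ℂ) (hs : R = Subring.closure ↑s) :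
    Algebra.FiniteType ℤ ↥R := by
  subst hs
  have h1 : Algebra.FiniteType ℤ ↥(Algebra.adjoin ℤ (↑s : Set ℂ)) :=
    (Subalgebra.fg_iff_finiteType _).mp ⟨s, rfl⟩
  exact h1.equiv (Subring.closureEquivAdjoinInt (↑s : Set ℂ)).symm

lemma mySubring_not_isField {R : Subring ℂ} (s : Finset ℂ) (hs : R = Subring.closure ↑s) :
    ¬ IsField ↥R := by
  intro hf
  letI : Field ↥R := hf.toField
  haveI : IsJacobsonRing ℤ := myInt_isJacobsonRing
  haveI hft : Algebra.FiniteType ℤ ↥R := mySubring_finiteType s hs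
  haveI := finite_of_finite_type_of_isJacobsonRing ℤ ↥R
  haveI : Algebra.IsIntegral ℤ ↥R := Algebra.IsIntegral.of_finite ℤ ↥R
  have h20 : (2 : ↥R) ≠ 0 := by
    intro h
    have := congrArg (R.subtype) h
    simp at this
  have h2 : IsIntegral ℤ ((2 : ↥R)⁻¹) := Algebra.IsIntegral.isIntegral _
  have h3 : IsIntegral ℤ (R.subtype.toIntAlgHom ((2 : ↥R)⁻¹)) := h2.map _
  have h4 : (R.subtype.toIntAlgHom ((2 : ↥R)⁻¹)) = (2 : ℂ)⁻¹ := by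
    have hmul : (2 : ↥R)⁻¹ * 2 = 1 := inv_mul_cancel₀ h20
    have := congrArg (R.subtype) hmul
    simp only [_root_.map_mul, _root_.map_one, map_ofNat] at this
    rw [RingHom.toIntAlgHom_coe]
    exact eq_inv_of_mul_eq_one_left this
  rw [h4] at h3
  have h6 : (IsScalarTower.toAlgHom ℤ ℚ ℂ) ((2 : ℚ)⁻¹) = (2 : ℂ)⁻¹ := by simp
  have h7 : IsIntegral ℤ ((2 : ℚ)⁻¹) := by
    rw [← isIntegral_algHom_iff (IsScalarTower.toAlgHom ℤ ℚ ℂ)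
      ((algebraMap ℚ ℂ).injective)] at *
    rw [h6]; exact h3
  obtain ⟨y, hy⟩ := IsIntegrallyClosed.isIntegral_iff.mp h7
  have hy' : ((y : ℤ) : ℚ) = 2⁻¹ := by rw [← hy]; simp
  have : ((2 * y : ℤ) : ℚ) = 1 := by push_cast; rw [hy']; norm_num
  have : (2 * y : ℤ) = 1 := by exact_mod_cast this
  omega

lemma myExists_maximal {R₀ : Type} [CommRing R₀] [IsDomain R₀] [IsJacobsonRing R₀]
    {r : R₀} (hr : r ≠ 0) : ∃ m : Ideal R₀, m.IsMaximal ∧ r ∉ m := by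
  have hjac : (⊥ : Ideal R₀).jacobson = ⊥ :=
    isJacobsonRing_iff_prime_eq.mp ‹_› ⊥ Ideal.bot_prime
  have hnotjac : r ∉ (⊥ : Ideal R₀).jacobson := by
    rw [hjac]; simpa using hr
  by_contra hcon
  push_neg at hcon
  apply hnotjac
  unfold Ideal.jacobson
  exact Submodule.mem_sInf.mpr fun J hJ => hcon J hJ.2

lemma myMax_ne_bot {R₀ : Type} [CommRing R₀] [Nontrivial R₀] (h : ¬ IsField R₀)
    {m : Ideal R₀} (hm : m.IsMaximal) : m ≠ ⊥ := by
  intro hbot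
  obtain ⟨J, hJ1, hJ2⟩ := Ring.not_isField_iff_exists_ideal_bot_lt_and_lt_top.mp h
  rw [hbot] at hm
  exact hJ2.ne (hm.out.2 J hJ1)

lemma myMapNegOne {R₀ S : Type} [CommRing R₀] [CommRing S] (g : R₀ →+* S) :
    (-1 : Matrix (Fin 2) (Fin 2) R₀).map g = (-1 : Matrix (Fin 2) (Fin 2) S) := by
  ext i j
  rw [Matrix.map_apply, Matrix.neg_apply, Matrix.neg_apply, _root_.map_neg]
  rcases eq_or_ne i j with rfl | hij
  · rw [Matrix.one_apply_eq, Matrix.one_apply_eq, _root_.map_one]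
  · rw [Matrix.one_apply_ne hij, Matrix.one_apply_ne hij, _root_.map_zero, neg_zero]

lemma myMapOne {R₀ S : Type} [CommRing R₀] [CommRing S] (g : R₀ →+* S) :
    (1 : Matrix (Fin 2) (Fin 2) R₀).map g = (1 : Matrix (Fin 2) (Fin 2) S) :=
  Matrix.map_one g (map_zero g) (map_one g)

lemma myCenter_of {S : Type} [CommRing S] (M : Matrix.SpecialLinearGroup (Fin 2) S)
    (h : (M : Matrix (Fin 2) (Fin 2) S) = 1 ∨ (M : Matrix (Fin 2) (Fin 2) S) = -1) :
    M ∈ Subgroup.center (Matrix.SpecialLinearGroup (Fin 2) S) := by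
  rw [Matrix.SpecialLinearGroup.mem_center_iff]
  rcases h with h | h
  · exact ⟨1, by norm_num [Fintype.card_fin], by rw [_root_.map_one, h]⟩
  · exact ⟨-1, by norm_num [Fintype.card_fin], by rw [_root_.map_neg, _root_.map_one, h]⟩

lemma myCenter_to {S : Type} [CommRing S] [NoZeroDivisors S]
    (M : Matrix.SpecialLinearGroup (Fin 2) S)
    (h : M ∈ Subgroup.center (Matrix.SpecialLinearGroup (Fin 2) S)) :
    (M : Matrix (Fin 2) (Fin 2) S) = 1 ∨ (M : Matrix (Fin 2) (Fin 2) S) = -1 := by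
  rw [Matrix.SpecialLinearGroup.mem_center_iff] at h
  obtain ⟨z, hz1, hz2⟩ := h
  rw [Fintype.card_fin] at hz1
  have hz : z = 1 ∨ z = -1 := mul_self_eq_one_iff.mp (by rw [← sq]; exact hz1)
  rcases hz with rfl | rfl
  · left; rw [← hz2, _root_.map_one]
  · right; rw [← hz2, _root_.map_neg, _root_.map_one]

lemma myCoeMap {R₀ S : Type} [CommRing R₀] [CommRing S] (g : R₀ →+* S)
    (M : Matrix.SpecialLinearGroup (Fin 2) R₀) :
    ((Matrix.SpecialLinearGroup.map g M : Matrix.SpecialLinearGroup (Fin 2) S) :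
      Matrix (Fin 2) (Fin 2) S) = (M : Matrix (Fin 2) (Fin 2) R₀).map g := by
  rw [Matrix.SpecialLinearGroup.map_apply_coe, RingHom.mapMatrix_apply]

lemma myKeymat {S : Type} [CommRing S] (R : Subring ℂ) (g : ↥R →+* S)
    (M N : Matrix.SpecialLinearGroup (Fin 2) ↥R)
    (h : (QuotientGroup.mk (Matrix.SpecialLinearGroup.map R.subtype M) : PSL2C) =
      QuotientGroup.mk (Matrix.SpecialLinearGroup.map R.subtype N)) :
    (QuotientGroup.mk (Matrix.SpecialLinearGroup.map g M) : PSL2 S) =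
      QuotientGroup.mk (Matrix.SpecialLinearGroup.map g N) := by
  have hinj : Function.Injective (R.subtype) := Subtype.coe_injective
  rw [QuotientGroup.eq] at h ⊢
  rw [← _root_.map_inv, ← _root_.map_mul] at h ⊢
  set P := M⁻¹ * N with hPdef
  have hc := myCenter_to _ h
  rw [myCoeMap] at hc
  rcases hc with hc | hc
  · have hP1 : P = 1 := by
      apply Subtype.ext
      apply Matrix.map_injective hinj
      show (P : Matrix (Fin 2) (Fin 2) ↥R).map R.subtype
        = ((1 : Matrix (Fin 2) (Fin 2) ↥R)).map R.subtype
      rw [hc, myMapOne]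
    rw [hP1, _root_.map_one]
    exact Subgroup.one_mem _
  · have hPm : (P : Matrix (Fin 2) (Fin 2) ↥R) = -1 := by
      apply Matrix.map_injective hinj
      show (P : Matrix (Fin 2) (Fin 2) ↥R).map R.subtype
        = ((-1 : Matrix (Fin 2) (Fin 2) ↥R)).map R.subtype
      rw [hc, myMapNegOne]
    apply myCenter_of
    rw [myCoeMap, hPm, myMapNegOne]
    right; rfl

lemma myEta {S : Type} [CommRing S] (R : Subring ℂ) (Γ : Subgroup PSL2C)
    (hΓR : ContainedInPSL2 R Γ) (g : ↥R →+* S) :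
    ∃ η : ↥Γ →* PSL2 S, ∀ (x : ↥Γ) (M : Matrix.SpecialLinearGroup (Fin 2) ↥R),
      (QuotientGroup.mk (Matrix.SpecialLinearGroup.map R.subtype M) : PSL2C) = (x : PSL2C) →
      η x = QuotientGroup.mk (Matrix.SpecialLinearGroup.map g M) := by
  classical
  let rep : ↥Γ → Matrix.SpecialLinearGroup (Fin 2) ↥R := fun x => (hΓR x).choose
  have hrep : ∀ x : ↥Γ,
      (QuotientGroup.mk (Matrix.SpecialLinearGroup.map R.subtype (rep x)) : PSL2C)
        = (x : PSL2C) := fun x => (hΓR x).choose_spec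
  have key : ∀ (x : ↥Γ) (M : Matrix.SpecialLinearGroup (Fin 2) ↥R),
      (QuotientGroup.mk (Matrix.SpecialLinearGroup.map R.subtype M) : PSL2C) = (x : PSL2C) →
      (QuotientGroup.mk (Matrix.SpecialLinearGroup.map g (rep x)) : PSL2 S) =
        QuotientGroup.mk (Matrix.SpecialLinearGroup.map g M) :=
    fun x M hM => myKeymat R g (rep x) M ((hrep x).trans hM.symm)
  refine ⟨MonoidHom.mk'
    (fun x => QuotientGroup.mk (Matrix.SpecialLinearGroup.map g (rep x))) ?_,
    fun x M hM => key x M hM⟩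
  intro x y
  have hxy : (QuotientGroup.mk
      (Matrix.SpecialLinearGroup.map R.subtype (rep x * rep y)) : PSL2C)
      = ((x * y : ↥Γ) : PSL2C) := by
    rw [_root_.map_mul, QuotientGroup.mk_mul, hrep x, hrep y]
    rfl
  beta_reduce
  rw [key (x * y) (rep x * rep y) hxy, _root_.map_mul, QuotientGroup.mk_mul]

lemma myEntry {R₀ S : Type} [CommRing R₀] [CommRing S] (g : R₀ →+* S)
    (M : Matrix (Fin 2) (Fin 2) R₀) (i1 j1 i2 j2 : Fin 2)
    (h : M.map g = 1 ∨ M.map g = -1) :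
    g (M i1 j1 - (1 : Matrix (Fin 2) (Fin 2) R₀) i1 j1) = 0 ∨
    g (M i2 j2 - (-1 : Matrix (Fin 2) (Fin 2) R₀) i2 j2) = 0 := by
  rcases h with h | h
  · left
    rw [_root_.map_sub]
    have h1 := congrFun (congrFun h i1) j1
    have h2 := congrFun (congrFun (myMapOne g) i1) j1
    rw [Matrix.map_apply] at h1 h2
    rw [h1, h2, ← h1, sub_self]
    -- note: goal should be closed; fallback below
  · right
    rw [_root_.map_sub]
    have h1 := congrFun (congrFun h i2) j2
    have h2 := congrFun (congrFun (myMapNegOne g) i2) j2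
    rw [Matrix.map_apply] at h1 h2
    rw [h1, h2, ← h1, sub_self]

/-- Let `Γ ≤ PSL(2, ℂ)` be a discrete subgroup of finite covolume contained in
`PSL(2, R)`, where `R` is a finitely generated subring of a number field.  Then every
maximal abelian subgroup `A` of `Γ` is closed in the congruence topology on `Γ`. -/
theorem maximal_abelian_subgroup_congruence_closed
    (Γ : Subgroup PSL2C) (hdisc : DiscreteTopology ↥Γ) (hvol : HasFiniteCovolume Γ)
    (R : Subring ℂ) (hR : IsFGSubringOfNumberField R) (hΓR : ContainedInPSL2 R Γ)
    (A : Subgroup ↥Γ) (hA : IsMaxAbelian A) :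
    CongruenceClosed R Γ (A : Set ↥Γ) := by
  intro γ hγ
  obtain ⟨a, haA, hna⟩ := myMaxAbelian_exists_noncomm hA hγ
  set c : ↥Γ := γ * a * γ⁻¹ * a⁻¹ with hcdef
  have hc1 : c ≠ 1 := fun h => hna (mul_inv_eq_iff_eq_mul.mp (mul_inv_eq_one.mp h))
  obtain ⟨B, hB⟩ := hΓR c
  have hcPSL : (c : PSL2C) ≠ 1 := fun h => hc1 (by exact_mod_cast h)
  have hBc : Matrix.SpecialLinearGroup.map R.subtype B ∉ Subgroup.center SL2C :=
    fun h => hcPSL (hB.symm.trans ((QuotientGroup.eq_one_iff _).mpr h))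
  have hB1 : (B : Matrix (Fin 2) (Fin 2) ↥R) ≠ 1 := by
    intro h
    exact hBc (myCenter_of _ (Or.inl (by rw [myCoeMap, h, myMapOne])))
  have hB2 : (B : Matrix (Fin 2) (Fin 2) ↥R) ≠ -1 := by
    intro h
    exact hBc (myCenter_of _ (Or.inr (by rw [myCoeMap, h, myMapNegOne])))
  obtain ⟨i1, j1, hd1⟩ : ∃ i j,
      (B : Matrix (Fin 2) (Fin 2) ↥R) i j ≠ (1 : Matrix (Fin 2) (Fin 2) ↥R) i j := by
    by_contra hcon
    push_neg at hcon
    exact hB1 (Matrix.ext hcon)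
  obtain ⟨i2, j2, hd2⟩ : ∃ i j,
      (B : Matrix (Fin 2) (Fin 2) ↥R) i j ≠ (-1 : Matrix (Fin 2) (Fin 2) ↥R) i j := by
    by_contra hcon
    push_neg at hcon
    exact hB2 (Matrix.ext hcon)
  have hr0 : ((B : Matrix (Fin 2) (Fin 2) ↥R) i1 j1 - (1 : Matrix (Fin 2) (Fin 2) ↥R) i1 j1) *
      ((B : Matrix (Fin 2) (Fin 2) ↥R) i2 j2 - (-1 : Matrix (Fin 2) (Fin 2) ↥R) i2 j2) ≠ 0 :=
    mul_ne_zero (sub_ne_zero.mpr hd1) (sub_ne_zero.mpr hd2)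
  obtain ⟨s, hs⟩ := hR.1
  haveI : IsJacobsonRing ℤ := myInt_isJacobsonRing
  haveI : Algebra.FiniteType ℤ ↥R := mySubring_finiteType s hs
  haveI : IsJacobsonRing ↥R := isJacobsonRing_of_finiteType (A := ℤ)
  obtain ⟨m, hmmax, hrm⟩ := myExists_maximal hr0
  haveI := hmmax
  have hmne : m ≠ ⊥ := myMax_ne_bot (mySubring_not_isField s hs) hmmax
  obtain ⟨η, hη⟩ := myEta (S := ↥R ⧸ m) R Γ hΓR (Ideal.Quotient.mk m)
  refine ⟨m, hmne, η, hη, ?_⟩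
  rintro ⟨p, hpA, hpγ⟩
  rw [SetLike.mem_coe] at hpA
  have hcomm_pa : p * a = a * p := hA.1 p hpA a haA
  have hηc : η c = 1 := by
    have h2 : η c = η γ * η a * (η γ)⁻¹ * (η a)⁻¹ := by
      rw [hcdef, _root_.map_mul, _root_.map_mul, _root_.map_mul,
        _root_.map_inv, _root_.map_inv]
    have h3 : η p * η a = η a * η p := by
      rw [← _root_.map_mul, ← _root_.map_mul, hcomm_pa]
    rw [h2, ← hpγ, h3]
    group
  have hηcB : η c = QuotientGroup.mk
      (Matrix.SpecialLinearGroup.map (Ideal.Quotient.mk m) B) := hη c B hB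
  rw [hηcB, QuotientGroup.eq_one_iff] at hηc
  haveI : m.IsPrime := hmmax.isPrime
  have hcase := myCenter_to _ hηc
  rw [myCoeMap] at hcase
  have hfin := myEntry (Ideal.Quotient.mk m) (B : Matrix (Fin 2) (Fin 2) ↥R) i1 j1 i2 j2 hcase
  rcases hfin with h | h
  · rw [Ideal.Quotient.eq_zero_iff_mem] at h
    exact hrm (Ideal.mul_mem_right _ _ h)
  · rw [Ideal.Quotient.eq_zero_iff_mem] at h
    exact hrm (Ideal.mul_mem_left _ _ h)
end
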